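/- Let u : D₁ → ℝ be continuous with ‖u‖_{L^∞(D_r)} ≤ C for some r ∈ (0,1). Then for all x, y ∈ D_r, the conformal distance satisfies d_g(x,y) ≥ e^{−C} · min{|x − y|, 2r − |x| − |y|}, where d_g(x,y) is the infimum over C¹ curves γ in D_r from x to y of ∫₀¹ e^{u(γ(t))}|γ'(t)| dt. -/

import Mathlib

open Metric Set MeasureTheory

/-- If `u` is continuous on the unit disk with `‖u‖_{L^∞(D_r)} ≤ C`, then every `C¹`
curve `γ` inside `D_r` joining `x` and `y` has conformal length
`∫₀¹ e^{u(γ(t))}|γ'(t)| dt ≥ e^{-C} min{|x-y|, 2r - |x| - |y|}`; hence so does the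
conformal distance `d_g(x,y)`. -/
theorem stmt1 (u : EuclideanSpace ℝ (Fin 2) → ℝ) (C r : ℝ) (hr0 : 0 < r) (hr1 : r < 1)
    (hu : ContinuousOn u (ball (0 : EuclideanSpace ℝ (Fin 2)) 1))
    (hbound : ∀ z ∈ ball (0 : EuclideanSpace ℝ (Fin 2)) r, |u z| ≤ C)
    (x y : EuclideanSpace ℝ (Fin 2)) (hx : x ∈ ball (0 : EuclideanSpace ℝ (Fin 2)) r)
    (hy : y ∈ ball (0 : EuclideanSpace ℝ (Fin 2)) r)
    (γ : ℝ → EuclideanSpace ℝ (Fin 2)) (hγ : ContDiffOn ℝ 1 γ (Set.Icc 0 1))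
    (hγmem : ∀ t ∈ Set.Icc (0:ℝ) 1, γ t ∈ ball (0 : EuclideanSpace ℝ (Fin 2)) r)
    (hγ0 : γ 0 = x) (hγ1 : γ 1 = y) :
    Real.exp (-C) * min ‖x - y‖ (2 * r - ‖x‖ - ‖y‖) ≤
      ∫ t in (0:ℝ)..1, Real.exp (u (γ t)) * ‖deriv γ t‖ := by
  have h01 : (0:ℝ) ≤ 1 := zero_le_one
  set g := derivWithin γ (Set.Icc (0:ℝ) 1) with hg
  have hγc : ContinuousOn γ (Set.Icc 0 1) := hγ.continuousOn
  have hgc : ContinuousOn g (Set.Icc 0 1) :=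
    hγ.continuousOn_derivWithin (uniqueDiffOn_Icc one_pos) le_rfl
  have hderiv_eq : ∀ t ∈ Set.Ioo (0:ℝ) 1, deriv γ t = g t := fun t ht =>
    (derivWithin_of_mem_nhds (Icc_mem_nhds ht.1 ht.2)).symm
  have hdd : ∀ t ∈ Set.Ioo (0:ℝ) 1, HasDerivAt γ (deriv γ t) t := fun t ht =>
    ((hγ.differentiableOn one_ne_zero t (Set.mem_Icc_of_Ioo ht)).differentiableAt
      (Icc_mem_nhds ht.1 ht.2)).hasDerivAt
  have hres : volume.restrict (Set.Ioc (0:ℝ) 1) = volume.restrict (Set.Ioo 0 1) :=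
    (Measure.restrict_congr_set Ioo_ae_eq_Ioc).symm
  have hae : ∀ᵐ t ∂(volume.restrict (Set.Ioc (0:ℝ) 1)), deriv γ t = g t := by
    rw [hres]
    filter_upwards [ae_restrict_mem measurableSet_Ioo] with t ht
    exact hderiv_eq t ht
  have hgint : IntervalIntegrable g volume 0 1 :=
    ContinuousOn.intervalIntegrable (by rwa [Set.uIcc_of_le h01])
  have hderint : IntervalIntegrable (deriv γ) volume 0 1 := by
    rw [intervalIntegrable_iff_integrableOn_Ioc_of_le h01] at hgint ⊢
    exact hgint.congr (hae.mono fun t ht => ht.symm)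
  have hFTC : ∫ t in (0:ℝ)..1, deriv γ t = y - x := by
    have := intervalIntegral.integral_eq_sub_of_hasDerivAt_of_le h01 hγc hdd hderint
    rw [hγ0, hγ1] at this; exact this
  have hxy : ‖x - y‖ ≤ ∫ t in (0:ℝ)..1, ‖deriv γ t‖ := by
    calc ‖x - y‖ = ‖∫ t in (0:ℝ)..1, deriv γ t‖ := by rw [hFTC, norm_sub_rev]
      _ ≤ ∫ t in (0:ℝ)..1, ‖deriv γ t‖ :=
        intervalIntegral.norm_integral_le_integral_norm h01
  -- integrability of the exponential-weighted integrand
  have hsub : Set.MapsTo γ (Set.Icc 0 1) (ball (0 : EuclideanSpace ℝ (Fin 2)) 1) :=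
    fun t ht => ball_subset_ball hr1.le (hγmem t ht)
  have hexpc : ContinuousOn (fun t => Real.exp (u (γ t))) (Set.Icc (0:ℝ) 1) :=
    Real.continuous_exp.comp_continuousOn (hu.comp hγc hsub)
  have hFc : ContinuousOn (fun t => Real.exp (u (γ t)) * ‖g t‖) (Set.Icc (0:ℝ) 1) :=
    hexpc.mul hgc.norm
  have hFint : IntervalIntegrable (fun t => Real.exp (u (γ t)) * ‖g t‖) volume 0 1 :=
    ContinuousOn.intervalIntegrable (by rwa [Set.uIcc_of_le h01])
  have hint2 : IntervalIntegrable (fun t => Real.exp (u (γ t)) * ‖deriv γ t‖) volume 0 1 := by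
    rw [intervalIntegrable_iff_integrableOn_Ioc_of_le h01] at hFint ⊢
    exact hFint.congr (hae.mono fun t ht => by simp [ht])
  have hint1 : IntervalIntegrable (fun t => Real.exp (-C) * ‖deriv γ t‖) volume 0 1 :=
    (hderint.norm).const_mul _
  have hmono : ∫ t in (0:ℝ)..1, Real.exp (-C) * ‖deriv γ t‖ ≤
      ∫ t in (0:ℝ)..1, Real.exp (u (γ t)) * ‖deriv γ t‖ := by
    apply intervalIntegral.integral_mono_on h01 hint1 hint2
    intro t ht
    have h1 : -C ≤ u (γ t) := neg_le_of_abs_le (hbound _ (hγmem t ht))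
    exact mul_le_mul_of_nonneg_right (Real.exp_le_exp.2 h1) (norm_nonneg _)
  calc Real.exp (-C) * min ‖x - y‖ (2 * r - ‖x‖ - ‖y‖)
      ≤ Real.exp (-C) * ‖x - y‖ :=
        mul_le_mul_of_nonneg_left (min_le_left _ _) (Real.exp_pos _).le
    _ ≤ Real.exp (-C) * ∫ t in (0:ℝ)..1, ‖deriv γ t‖ :=
        mul_le_mul_of_nonneg_left hxy (Real.exp_pos _).le
    _ = ∫ t in (0:ℝ)..1, Real.exp (-C) * ‖deriv γ t‖ :=
        (intervalIntegral.integral_const_mul _ _).symm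
    _ ≤ _ := hmono
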